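/- Let Ξ be the output distribution of the Change-types construction applied to a detailing ξ of μ with respect to A, a distribution η on A×B with η|_1 = ξ|_2, and a map H: {1,…,n} → ([0,1]^{A×B})² with (H(i))_1(a,b) = t_i(a) for all i, a, b. Then d_EM(Ξ|_1, Ξ|_2) ≤ (1/n)·Σ_{i=1}^n E_{(a,b)~η}[ |(H(i))_2(a,b) − (H(i))_1(a,b)| ], where d_EM is the Earth Mover distance with respect to the normalized Hamming distance. -/
import Mathlib


open scoped BigOperators

namespace HugeObject

noncomputable section

/-- A finitely supported probability distribution on `Ω`, given by its mass function. -/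
def IsDist {Ω : Type*} (μ : Ω → ℝ) : Prop :=
  (∀ x, 0 ≤ μ x) ∧ (Function.support μ).Finite ∧ ∑ᶠ x, μ x = 1

/-- Total variation distance between two mass functions. -/
def dTV {Ω : Type*} (μ τ : Ω → ℝ) : ℝ :=
  (1 / 2) * ∑ᶠ x, |μ x - τ x|

/-- `T` is a transfer distribution (coupling) between `μ` and `τ`. -/
def IsCoupling {A B : Type*} (T : A × B → ℝ) (μ : A → ℝ) (τ : B → ℝ) : Prop :=
  IsDist T ∧ (∀ a, ∑ᶠ b, T (a, b) = μ a) ∧ (∀ b, ∑ᶠ a, T (a, b) = τ b)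

/-- Earth Mover distance with respect to a distance function `d`: the infimum, over
all transfer distributions between `μ` and `τ`, of the expected distance. -/
def dEM {Ω : Type*} (d : Ω → Ω → ℝ) (μ τ : Ω → ℝ) : ℝ :=
  sInf {c | ∃ T : Ω × Ω → ℝ, IsCoupling T μ τ ∧ c = ∑ᶠ p : Ω × Ω, T p * d p.1 p.2}

/-- η-weighted ℓ1 distance between vectors. -/
def wl1 {A : Type*} (η : A → ℝ) (x y : A → ℝ) : ℝ := ∑ᶠ a, η a * |x a - y a|

/-- A distribution on vectors is supported on `[0,1]^A`. -/
def SuppIn01 {A : Type*} (Λ : (A → ℝ) → ℝ) : Prop :=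
  ∀ t, Λ t ≠ 0 → ∀ a, t a ∈ Set.Icc (0 : ℝ) 1

/-- Empirical distribution of the tuple `t` (distribution of `t I` for uniform `I`). -/
def empDist {n : ℕ} {α : Type*} (t : Fin n → α) : α → ℝ :=
  fun u => (Nat.card {i : Fin n // t i = u} : ℝ) / n

/-- Normalized Hamming distance on `{0,1}^n`. -/
def normHamming (n : ℕ) (x y : Fin n → Bool) : ℝ :=
  (Nat.card {i : Fin n // x i ≠ y i} : ℝ) / n

section Detailing

variable {n : ℕ} {A : Type*} [Fintype A]

/-- Weight distribution (second marginal) of a detailing. -/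
def weight (ξ : (Fin n → Bool) × A → ℝ) (a : A) : ℝ := ∑ x : Fin n → Bool, ξ (x, a)

/-- `ξ` is a detailing of `μ` with respect to `A`: a distribution on
`{0,1}^n × A` whose first marginal is `μ`. -/
def IsDetailing (ξ : (Fin n → Bool) × A → ℝ) (μ : (Fin n → Bool) → ℝ) : Prop :=
  IsDist ξ ∧ ∀ x, ∑ a : A, ξ (x, a) = μ x

/-- Component distribution `μ_a` of a detailing. -/
def component (ξ : (Fin n → Bool) × A → ℝ) (a : A) : (Fin n → Bool) → ℝ :=
  fun x => ξ (x, a) / weight ξ a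

/-- The type of index `i`: `t_i a = Pr_{x ~ μ_a} [x i = 1]` (0 when the weight vanishes). -/
def typeOf (ξ : (Fin n → Bool) × A → ℝ) (i : Fin n) : A → ℝ :=
  fun a => (∑ x : Fin n → Bool, if x i then ξ (x, a) else 0) / weight ξ a

/-- The type distribution of a detailing: distribution of `typeOf ξ I` for uniform `I`. -/
def typeDist (ξ : (Fin n → Bool) × A → ℝ) : (A → ℝ) → ℝ :=
  empDist (fun i : Fin n => typeOf ξ i)

/-- The index of a detailing. -/
def ind (ξ : (Fin n → Bool) × A → ℝ) : ℝ :=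
  (∑ i : Fin n, ∑ a : A, weight ξ a * typeOf ξ i a ^ 2) / n

end Detailing

section Goodness

variable {n q : ℕ}

/-- Marginal of coordinate `j`. -/
def margAt (ν : (Fin n → Bool) → ℝ) (j : Fin n) : Bool → ℝ :=
  fun b => ∑ x : Fin n → Bool, if x j = b then ν x else 0

/-- Joint distribution of the coordinates listed in `J`. -/
def jointAt (ν : (Fin n → Bool) → ℝ) (J : Fin q → Fin n) : (Fin q → Bool) → ℝ :=
  fun y => ∑ x : Fin n → Bool, if ∀ ℓ, x (J ℓ) = y ℓ then ν x else 0

/-- The tuple `J` is ε-independent with respect to `ν`. -/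
def EpsIndep (ε : ℝ) (ν : (Fin n → Bool) → ℝ) (J : Fin q → Fin n) : Prop :=
  dTV (jointAt ν J) (fun y => ∏ ℓ, margAt ν (J ℓ) (y ℓ)) ≤ ε

/-- A distribution on `{0,1}^n` is (ε,q)-good. -/
def IsGoodDist (ε : ℝ) (q : ℕ) (ν : (Fin n → Bool) → ℝ) : Prop :=
  (1 - ε) * (n : ℝ) ^ q ≤ (Nat.card {J : Fin q → Fin n // EpsIndep ε ν J} : ℝ)

/-- A detailing is (ε,q)-good. -/
def IsGoodDetailing {A : Type*} [Fintype A] (ε : ℝ) (q : ℕ)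
    (ξ : (Fin n → Bool) × A → ℝ) : Prop :=
  ∃ J : Finset A, 1 - ε ≤ ∑ a ∈ J, weight ξ a ∧ ∀ a ∈ J, IsGoodDist ε q (component ξ a)

end Goodness

/-- The simulated distribution `D_sim(η, Λ)` on `{0,1}^{s×q}`. -/
def Dsim {A : Type*} [Fintype A] (s q : ℕ) (η : A → ℝ) (Λ : (A → ℝ) → ℝ) :
    (Fin s → Fin q → Bool) → ℝ :=
  fun M => ∑ᶠ T : Fin q → (A → ℝ),
    (∏ j, Λ (T j)) * ∑ a : Fin s → A, (∏ i, η (a i)) *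
      ∏ i : Fin s, ∏ j : Fin q, if M i j then T j (a i) else 1 - T j (a i)

/-- The canonical (s,q) test distribution `D_test` for `μ`. -/
def Dtest (s q n : ℕ) (μ : (Fin n → Bool) → ℝ) : (Fin s → Fin q → Bool) → ℝ :=
  fun M => (∑ J : Fin q → Fin n, ∑ x : Fin s → Fin n → Bool,
    (∏ i, μ (x i)) * (if ∀ i ℓ, x i (J ℓ) = M i ℓ then (1 : ℝ) else 0)) / (n : ℝ) ^ q

/-- Flat refinement of the detailing `ξ` with respect to `η` on `A × B`. -/
def flatRef {n : ℕ} {A B : Type*} [Fintype A] (ξ : (Fin n → Bool) × A → ℝ)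
    (η : A × B → ℝ) : (Fin n → Bool) × (A × B) → ℝ :=
  fun p => η p.2 * component ξ p.2.1 p.1

/-- One-step transition probability of the Change-types construction:
probability of outputting `yi` at a coordinate with source value `xi`,
source type value `h1` and target type value `h2`. -/
def flipStep (h1 h2 : ℝ) (xi yi : Bool) : ℝ :=
  if xi then (if yi then 1 - max 0 ((h1 - h2) / h1) else max 0 ((h1 - h2) / h1))
  else (if yi then max 0 ((h2 - h1) / (1 - h1)) else 1 - max 0 ((h2 - h1) / (1 - h1)))

/-- The output distribution `Ξ` of the Change-types construction. -/
def changeTypes {n : ℕ} {A B : Type*} [Fintype A] (ξ : (Fin n → Bool) × A → ℝ)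
    (η : A × B → ℝ) (H : Fin n → (A × B → ℝ) × (A × B → ℝ)) :
    (Fin n → Bool) × (Fin n → Bool) × (A × B) → ℝ :=
  fun p => η p.2.2 * component ξ p.2.2.1 p.1 *
    ∏ i, flipStep ((H i).1 p.2.2) ((H i).2 p.2.2) (p.1 i) (p.2.1 i)


section AuxChangeTypes

open Finset

private lemma flip_sum (h1 h2 : ℝ) (xi : Bool) :
    flipStep h1 h2 xi true + flipStep h1 h2 xi false = 1 := by
  cases xi <;> simp [flipStep]

private lemma flip_nonneg {h1 h2 : ℝ} (hh1 : h1 ∈ Set.Icc (0:ℝ) 1) (hh2 : h2 ∈ Set.Icc (0:ℝ) 1)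
    (xi yi : Bool) : 0 ≤ flipStep h1 h2 xi yi := by
  obtain ⟨h10, h11⟩ := hh1
  obtain ⟨h20, h21⟩ := hh2
  have k1 : max 0 ((h1 - h2) / h1) ≤ 1 := by
    rcases eq_or_lt_of_le h10 with h | h
    · rw [← h]; simp
    · exact max_le zero_le_one ((div_le_one h).2 (by linarith))
  have k2 : max 0 ((h2 - h1) / (1 - h1)) ≤ 1 := by
    rcases eq_or_lt_of_le h11 with h | h
    · rw [h]; simp
    · exact max_le zero_le_one ((div_le_one (by linarith)).2 (by linarith))
  cases xi <;> cases yi <;> simp [flipStep]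
  exacts [le_trans (le_max_right _ _) k2, le_trans (le_max_right _ _) k1]

private lemma max_add_max_neg (a : ℝ) : max 0 a + max 0 (-a) = |a| := by
  rcases le_total 0 a with h | h
  · rw [max_eq_right h, max_eq_left (by linarith), abs_of_nonneg h]; ring
  · rw [max_eq_left h, max_eq_right (by linarith), abs_of_nonpos h]; ring

private lemma flip_expect {h1 h2 : ℝ} (hh1 : h1 ∈ Set.Icc (0:ℝ) 1) (hh2 : h2 ∈ Set.Icc (0:ℝ) 1) :
    h1 * max 0 ((h1 - h2) / h1) + (1 - h1) * max 0 ((h2 - h1) / (1 - h1)) = |h2 - h1| := by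
  obtain ⟨h10, h11⟩ := hh1
  obtain ⟨h20, h21⟩ := hh2
  have e1 : h1 * max 0 ((h1 - h2) / h1) = max 0 (h1 - h2) := by
    rcases eq_or_lt_of_le h10 with h | h
    · rw [← h, zero_mul, zero_sub, max_eq_left (neg_nonpos.2 h20)]
    · rw [mul_max_of_nonneg _ _ h.le, mul_zero, mul_div_cancel₀ _ (ne_of_gt h)]
  have e2 : (1 - h1) * max 0 ((h2 - h1) / (1 - h1)) = max 0 (h2 - h1) := by
    rcases eq_or_lt_of_le h11 with h | h
    · rw [h, sub_self, zero_mul, max_eq_left (by linarith)]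
    · rw [mul_max_of_nonneg _ _ (by linarith : (0:ℝ) ≤ 1 - h1), mul_zero,
        mul_div_cancel₀ _ (by linarith : (1:ℝ) - h1 ≠ 0)]
  rw [e1, e2, show h1 - h2 = -(h2 - h1) by ring, add_comm]
  exact max_add_max_neg _

private lemma sum_pi_bool {m : ℕ} (F : Fin m → Bool → ℝ) :
    ∑ y : Fin m → Bool, ∏ i, F i (y i) = ∏ i, (F i true + F i false) := by
  rw [← Fintype.prod_sum]
  exact Finset.prod_congr rfl fun i _ => Fintype.sum_bool _

private lemma sum_swap4 {α β γ δ : Type*} [Fintype α] [Fintype β] [Fintype γ] [Fintype δ]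
    (f : α → β → γ → δ → ℝ) :
    ∑ x : α, ∑ y : β, ∑ i : γ, ∑ ab : δ, f x y i ab
    = ∑ i : γ, ∑ ab : δ, ∑ x : α, ∑ y : β, f x y i ab :=
  calc ∑ x : α, ∑ y : β, ∑ i : γ, ∑ ab : δ, f x y i ab
      = ∑ x : α, ∑ i : γ, ∑ y : β, ∑ ab : δ, f x y i ab :=
        Finset.sum_congr rfl fun x _ => Finset.sum_comm
    _ = ∑ i : γ, ∑ x : α, ∑ y : β, ∑ ab : δ, f x y i ab := Finset.sum_comm
    _ = ∑ i : γ, ∑ x : α, ∑ ab : δ, ∑ y : β, f x y i ab :=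
        Finset.sum_congr rfl fun i _ => Finset.sum_congr rfl fun x _ => Finset.sum_comm
    _ = ∑ i : γ, ∑ ab : δ, ∑ x : α, ∑ y : β, f x y i ab :=
        Finset.sum_congr rfl fun i _ => Finset.sum_comm

end AuxChangeTypes

/-- Pushforward of a mass function along `f`. -/
def push {α β : Type*} (f : α → β) (μ : α → ℝ) : β → ℝ :=
  fun b => ∑ᶠ a ∈ {a | f a = b}, μ a

/-- Rounding to the nearest integer multiple of `ρ`. -/
def roundMul (ρ x : ℝ) : ℝ := ρ * round (x / ρ)

/-- Adjustment of `η` to `ν`. -/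
def adjust {A B : Type*} [Fintype B] (ν : A → ℝ) (η : A × B → ℝ) : A × B → ℝ :=
  fun p => ν p.1 * (η p / ∑ b : B, η (p.1, b))

end
end HugeObject

open HugeObject

/-- the two marginal distributions of the Change-types construction
are close in Earth Mover distance (over the normalized Hamming distance), up to
the average discrepancy between the source and target types. -/
theorem changeTypes_emd_bound {A B : Type*} [Fintype A] [Fintype B]
    (n : ℕ) (hn : 0 < n)
    (μ : (Fin n → Bool) → ℝ) (hμ : IsDist μ)
    (ξ : (Fin n → Bool) × A → ℝ) (hξ : IsDetailing ξ μ)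
    (η : A × B → ℝ) (hη : IsDist η)
    (hη1 : ∀ a, ∑ b : B, η (a, b) = weight ξ a)
    (H : Fin n → (A × B → ℝ) × (A × B → ℝ))
    (hH01 : ∀ i ab, (H i).1 ab ∈ Set.Icc (0 : ℝ) 1 ∧ (H i).2 ab ∈ Set.Icc (0 : ℝ) 1)
    (hH1 : ∀ i ab, (H i).1 ab = typeOf ξ i ab.1) :
    dEM (normHamming n)
      (fun x => ∑ y : Fin n → Bool, ∑ ab : A × B, changeTypes ξ η H (x, y, ab))
      (fun y => ∑ x : Fin n → Bool, ∑ ab : A × B, changeTypes ξ η H (x, y, ab))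
      ≤ (∑ i : Fin n, ∑ ab : A × B, η ab * |(H i).2 ab - (H i).1 ab|) / n := by
  classical
  obtain ⟨⟨ξnn, -, -⟩, -⟩ := hξ
  obtain ⟨ηnn, -, ηtot⟩ := hη
  have wnn : ∀ a : A, 0 ≤ weight ξ a := fun a => Finset.sum_nonneg fun x _ => ξnn (x, a)
  have compnn : ∀ (a : A) (x : Fin n → Bool), 0 ≤ component ξ a x :=
    fun a x => div_nonneg (ξnn (x, a)) (wnn a)
  have ηzero : ∀ ab : A × B, weight ξ ab.1 = 0 → η ab = 0 := by
    intro ab hw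
    have h0 : ∑ b : B, η (ab.1, b) = 0 := by rw [hη1 ab.1, hw]
    have := (Finset.sum_eq_zero_iff_of_nonneg (fun b _ => ηnn (ab.1, b))).1 h0 ab.2
      (Finset.mem_univ _)
    simpa using this
  have ctnn : ∀ (x y : Fin n → Bool) (ab : A × B), 0 ≤ changeTypes ξ η H (x, y, ab) := by
    intro x y ab
    simp only [changeTypes]
    refine mul_nonneg (mul_nonneg (ηnn ab) (compnn _ _)) (Finset.prod_nonneg fun i _ => ?_)
    exact flip_nonneg (hH01 i ab).1 (hH01 i ab).2 _ _
  have sumY : ∀ (x : Fin n → Bool) (ab : A × B),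
      ∑ y : Fin n → Bool, ∏ i, flipStep ((H i).1 ab) ((H i).2 ab) (x i) (y i) = 1 := by
    intro x ab
    exact (sum_pi_bool fun i b => flipStep ((H i).1 ab) ((H i).2 ab) (x i) b).trans
      (Finset.prod_eq_one fun i _ => flip_sum _ _ _)
  have hmass : ∀ x : Fin n → Bool, ∑ y : Fin n → Bool, ∑ ab : A × B, changeTypes ξ η H (x, y, ab)
      = ∑ ab : A × B, η ab * component ξ ab.1 x := by
    intro x
    rw [Finset.sum_comm]
    refine Finset.sum_congr rfl fun ab _ => ?_
    simp only [changeTypes]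
    rw [← Finset.mul_sum, sumY x ab, mul_one]
  have ηw : ∀ ab : A × B, ∑ x : Fin n → Bool, η ab * component ξ ab.1 x = η ab := by
    intro ab
    rw [← Finset.mul_sum]
    by_cases hw : weight ξ ab.1 = 0
    · rw [ηzero ab hw, zero_mul]
    · have hone : ∑ x : Fin n → Bool, component ξ ab.1 x = 1 := by
        unfold component
        rw [← Finset.sum_div, div_eq_one_iff_eq hw]
        rfl
      rw [hone, mul_one]
  -- the coupling
  have hcoup : IsCoupling (fun p : (Fin n → Bool) × (Fin n → Bool) =>
        ∑ ab : A × B, changeTypes ξ η H (p.1, p.2, ab))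
      (fun x => ∑ y : Fin n → Bool, ∑ ab : A × B, changeTypes ξ η H (x, y, ab))
      (fun y => ∑ x : Fin n → Bool, ∑ ab : A × B, changeTypes ξ η H (x, y, ab)) := by
    refine ⟨⟨fun p => Finset.sum_nonneg fun ab _ => ctnn _ _ _, Set.toFinite _, ?_⟩, ?_, ?_⟩
    · rw [finsum_eq_sum_of_fintype, Fintype.sum_prod_type]
      calc ∑ x : Fin n → Bool, ∑ y : Fin n → Bool, ∑ ab : A × B, changeTypes ξ η H (x, y, ab)
          = ∑ x : Fin n → Bool, ∑ ab : A × B, η ab * component ξ ab.1 x :=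
            Finset.sum_congr rfl fun x _ => hmass x
        _ = ∑ ab : A × B, ∑ x : Fin n → Bool, η ab * component ξ ab.1 x := Finset.sum_comm
        _ = ∑ ab : A × B, η ab := Finset.sum_congr rfl fun ab _ => ηw ab
        _ = 1 := by rw [← finsum_eq_sum_of_fintype]; exact ηtot
    · intro x
      rw [finsum_eq_sum_of_fintype]
    · intro y
      rw [finsum_eq_sum_of_fintype]
  -- Hamming distance as a sum
  have hham : ∀ x y : Fin n → Bool,
      normHamming n x y = (∑ i, if x i ≠ y i then (1:ℝ) else 0) / n := by
    intro x y
    unfold normHamming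
    congr 1
    rw [Nat.card_eq_fintype_card, Fintype.card_subtype, Finset.card_filter]
    push_cast
    rfl
  -- the key per-coordinate computation
  have key : ∀ (i : Fin n) (ab : A × B),
      ∑ x : Fin n → Bool, ∑ y : Fin n → Bool,
        changeTypes ξ η H (x, y, ab) * (if x i ≠ y i then (1:ℝ) else 0)
      = η ab * |(H i).2 ab - (H i).1 ab| := by
    intro i ab
    by_cases hw : weight ξ ab.1 = 0
    · simp [changeTypes, ηzero ab hw]
    · have hy : ∀ x : Fin n → Bool,
          ∑ y : Fin n → Bool, (∏ j, flipStep ((H j).1 ab) ((H j).2 ab) (x j) (y j)) *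
            (if x i ≠ y i then (1:ℝ) else 0)
          = flipStep ((H i).1 ab) ((H i).2 ab) (x i) (!(x i)) := by
        intro x
        have step1 : ∀ y : Fin n → Bool,
            (∏ j, flipStep ((H j).1 ab) ((H j).2 ab) (x j) (y j)) *
              (if x i ≠ y i then (1:ℝ) else 0)
            = ∏ j, (flipStep ((H j).1 ab) ((H j).2 ab) (x j) (y j) *
                (if j = i then (if x j ≠ y j then (1:ℝ) else 0) else 1)) := by
          intro y
          rw [Finset.prod_mul_distrib, Finset.prod_ite_eq' Finset.univ i
            (fun j => if x j ≠ y j then (1:ℝ) else 0)]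
          simp
        rw [Finset.sum_congr rfl fun y _ => step1 y,
          sum_pi_bool fun j b => flipStep ((H j).1 ab) ((H j).2 ab) (x j) b *
            (if j = i then (if x j ≠ b then (1:ℝ) else 0) else 1)]
        have step2 : ∀ j : Fin n,
            (flipStep ((H j).1 ab) ((H j).2 ab) (x j) true *
              (if j = i then (if x j ≠ true then (1:ℝ) else 0) else 1))
            + (flipStep ((H j).1 ab) ((H j).2 ab) (x j) false *
              (if j = i then (if x j ≠ false then (1:ℝ) else 0) else 1))
            = if j = i then flipStep ((H i).1 ab) ((H i).2 ab) (x i) (!(x i)) else 1 := by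
          intro j
          by_cases hj : j = i
          · subst hj
            cases hxj : x j <;> simp [hxj, flipStep]
          · simp only [hj, if_false, mul_one]
            exact flip_sum _ _ _
        rw [Finset.prod_congr rfl fun j _ => step2 j,
          Finset.prod_ite_eq' Finset.univ i
            (fun _ => flipStep ((H i).1 ab) ((H i).2 ab) (x i) (!(x i)))]
        simp
      have hflipval : ∀ b : Bool, flipStep ((H i).1 ab) ((H i).2 ab) b (!b)
          = if b then max 0 (((H i).1 ab - (H i).2 ab) / (H i).1 ab)
            else max 0 (((H i).2 ab - (H i).1 ab) / (1 - (H i).1 ab)) := by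
        intro b; cases b <;> simp [flipStep]
      have htype : ∑ x : Fin n → Bool, (if x i then component ξ ab.1 x else 0)
          = typeOf ξ i ab.1 := by
        have e : ∀ x : Fin n → Bool, (if x i then component ξ ab.1 x else 0)
            = (if x i then ξ (x, ab.1) else 0) / weight ξ ab.1 := by
          intro x; by_cases hxi : x i <;> simp [hxi, component]
        rw [Finset.sum_congr rfl fun x _ => e x, ← Finset.sum_div]
        rfl
      have hcompsum : ∑ x : Fin n → Bool, component ξ ab.1 x = 1 := by
        unfold component
        rw [← Finset.sum_div, div_eq_one_iff_eq hw]
        rfl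
      calc ∑ x : Fin n → Bool, ∑ y : Fin n → Bool,
            changeTypes ξ η H (x, y, ab) * (if x i ≠ y i then (1:ℝ) else 0)
          = ∑ x : Fin n → Bool, η ab * (component ξ ab.1 x *
              flipStep ((H i).1 ab) ((H i).2 ab) (x i) (!(x i))) := by
            refine Finset.sum_congr rfl fun x _ => ?_
            calc ∑ y : Fin n → Bool,
                  changeTypes ξ η H (x, y, ab) * (if x i ≠ y i then (1:ℝ) else 0)
                = ∑ y : Fin n → Bool, η ab * component ξ ab.1 x *
                    ((∏ j, flipStep ((H j).1 ab) ((H j).2 ab) (x j) (y j)) *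
                      (if x i ≠ y i then (1:ℝ) else 0)) := by
                  refine Finset.sum_congr rfl fun y _ => ?_
                  simp only [changeTypes]
                  ring
              _ = η ab * component ξ ab.1 x *
                    flipStep ((H i).1 ab) ((H i).2 ab) (x i) (!(x i)) := by
                  rw [← Finset.mul_sum, hy x]
              _ = η ab * (component ξ ab.1 x *
                    flipStep ((H i).1 ab) ((H i).2 ab) (x i) (!(x i))) := by ring
        _ = η ab * ∑ x : Fin n → Bool, component ξ ab.1 x *
              flipStep ((H i).1 ab) ((H i).2 ab) (x i) (!(x i)) := by
            rw [Finset.mul_sum]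
        _ = η ab * (typeOf ξ i ab.1 * max 0 (((H i).1 ab - (H i).2 ab) / (H i).1 ab)
              + (1 - typeOf ξ i ab.1) *
                max 0 (((H i).2 ab - (H i).1 ab) / (1 - (H i).1 ab))) := by
            congr 1
            have e : ∀ x : Fin n → Bool,
                component ξ ab.1 x * flipStep ((H i).1 ab) ((H i).2 ab) (x i) (!(x i))
                = (if x i then component ξ ab.1 x else 0) *
                    max 0 (((H i).1 ab - (H i).2 ab) / (H i).1 ab)
                  + (component ξ ab.1 x - (if x i then component ξ ab.1 x else 0)) *
                    max 0 (((H i).2 ab - (H i).1 ab) / (1 - (H i).1 ab)) := by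
              intro x
              rw [hflipval (x i)]
              by_cases hxi : x i <;> simp [hxi] <;> ring
            rw [Finset.sum_congr rfl fun x _ => e x, Finset.sum_add_distrib,
              ← Finset.sum_mul, ← Finset.sum_mul, Finset.sum_sub_distrib, htype, hcompsum]
        _ = η ab * |(H i).2 ab - (H i).1 ab| := by
            rw [← hH1 i ab, flip_expect (hH01 i ab).1 (hH01 i ab).2]
  -- conclude
  have hcost : ∑ᶠ p : (Fin n → Bool) × (Fin n → Bool),
      (∑ ab : A × B, changeTypes ξ η H (p.1, p.2, ab)) * normHamming n p.1 p.2
      = (∑ i, ∑ ab : A × B, η ab * |(H i).2 ab - (H i).1 ab|) / n := by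
    rw [finsum_eq_sum_of_fintype, Fintype.sum_prod_type]
    calc ∑ x : Fin n → Bool, ∑ y : Fin n → Bool,
            (∑ ab : A × B, changeTypes ξ η H (x, y, ab)) * normHamming n x y
          = ∑ x : Fin n → Bool, ∑ y : Fin n → Bool,
              (∑ i, ∑ ab : A × B, changeTypes ξ η H (x, y, ab) *
                (if x i ≠ y i then (1:ℝ) else 0)) / n := by
            refine Finset.sum_congr rfl fun x _ => Finset.sum_congr rfl fun y _ => ?_
            rw [hham x y, ← mul_div_assoc]
            congr 1
            rw [Finset.mul_sum]
            exact Finset.sum_congr rfl fun i _ => Finset.sum_mul _ _ _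
        _ = (∑ x : Fin n → Bool, ∑ y : Fin n → Bool,
              ∑ i, ∑ ab : A × B, changeTypes ξ η H (x, y, ab) *
                (if x i ≠ y i then (1:ℝ) else 0)) / n := by
            simp only [← Finset.sum_div]
        _ = (∑ i, ∑ ab : A × B, ∑ x : Fin n → Bool, ∑ y : Fin n → Bool,
              changeTypes ξ η H (x, y, ab) * (if x i ≠ y i then (1:ℝ) else 0)) / n := by
            rw [sum_swap4 fun x y i ab => changeTypes ξ η H (x, y, ab) *
              (if x i ≠ y i then (1:ℝ) else 0)]
        _ = (∑ i, ∑ ab : A × B, η ab * |(H i).2 ab - (H i).1 ab|) / n := by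
            congr 1
            exact Finset.sum_congr rfl fun i _ => Finset.sum_congr rfl fun ab _ => key i ab
  unfold dEM
  refine csInf_le_of_le ?_ ?_ hcost.le
  · refine ⟨0, fun c hc => ?_⟩
    obtain ⟨T', hT', rfl⟩ := hc
    refine finsum_nonneg fun p => mul_nonneg (hT'.1.1 p) ?_
    unfold normHamming
    positivity
  · exact ⟨_, hcoup, rfl⟩
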